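/- For every integer n ≥ 1, m_{2n}(√2) = Σ_{j=0}^{n} C(2n, 2j) · 2^j / ((2n − 2j + 1)(2j + 1)), and this quantity also equals (2^n − 1)^{−1} · Σ_{j=0}^{n−1} C(2n, 2j) · m_{2j}(√2). -/

import Mathlib

open MeasureTheory ProbabilityTheory Finset

/-! ### Combinatorial auxiliary lemmas -/

private lemma pairSum15 (g : ℕ → ℕ) (m : ℕ) :
    ∑ k ∈ range (m+1), (g (2*k) + g (2*k+1)) = ∑ j ∈ range (2*m+2), g j := by
  induction m with
  | zero => simp [Finset.sum_range_succ]
  | succ m ih =>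
      rw [Finset.sum_range_succ, ih]
      have e2 : 2*(m+1)+2 = (2*m+2)+1+1 := by ring
      have e1 : 2*(m+1) = (2*m+2) := by ring
      rw [e2, Finset.sum_range_succ, Finset.sum_range_succ, e1]
      simp [Finset.sum_range_succ]; ring

private lemma oddSum15 (m : ℕ) : ∑ k ∈ range (m+1), (2*m+1).choose (2*k+1) = 4^m := by
  calc ∑ k ∈ range (m+1), (2*m+1).choose (2*k+1)
      = ∑ k ∈ range (m+1), ((2*m).choose (2*k) + (2*m).choose (2*k+1)) := by
        exact Finset.sum_congr rfl fun k _ => Nat.choose_succ_succ _ _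
    _ = ∑ j ∈ range (2*m+2), (2*m).choose j := pairSum15 _ m
    _ = ∑ j ∈ range (2*m+1), (2*m).choose j := by
        rw [Finset.sum_range_succ, Nat.choose_eq_zero_of_lt (by omega), Nat.add_zero]
    _ = 2^(2*m) := Nat.sum_range_choose (2*m)
    _ = 4^m := by rw [pow_mul]; norm_num

private lemma invSum15 (m : ℕ) :
    ∑ k ∈ range (m+1), ((2*m).choose (2*k) : ℝ) / (2*(k:ℝ)+1) = 4^m / (2*(m:ℝ)+1) := by
  have hm : (2*(m:ℝ)+1) ≠ 0 := by positivity
  rw [eq_div_iff hm]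
  have key : ∀ k ∈ range (m+1),
      ((2*m).choose (2*k) : ℝ) / (2*(k:ℝ)+1) * (2*(m:ℝ)+1) = ((2*m+1).choose (2*k+1) : ℝ) := by
    intro k _
    have hk : (2*(k:ℝ)+1) ≠ 0 := by positivity
    have hnat := Nat.add_one_mul_choose_eq (2*m) (2*k)
    have hcast : ((2*m+1 : ℕ) : ℝ) * ((2*m).choose (2*k) : ℝ)
        = ((2*m+1).choose (2*k+1) : ℝ) * ((2*k+1 : ℕ) : ℝ) := by exact_mod_cast hnat
    push_cast at hcast
    field_simp
    linarith [hcast]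
  rw [Finset.sum_mul, Finset.sum_congr rfl key]
  exact_mod_cast oddSum15 m

private lemma evenFilter15 (g : ℕ → ℝ) (q : ℕ) :
    ∑ j ∈ range (2*q+1), (if Even j then (1:ℝ) else 0) * g j = ∑ i ∈ range (q+1), g (2*i) := by
  induction q with
  | zero => simp
  | succ q ih =>
      have e : 2*(q+1)+1 = (2*q+1)+1+1 := by ring
      rw [e, Finset.sum_range_succ, Finset.sum_range_succ, ih, Finset.sum_range_succ]
      have ho : ¬ Even (2*q+1) := by simp [Nat.even_add_one, parity_simps]
      have he : Even (2*q+1+1) := ⟨q+1, by ring⟩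
      rw [if_neg ho, if_pos he]
      have e2 : 2*q+1+1 = 2*(q+1) := by ring
      rw [e2, Finset.sum_range_succ, Finset.sum_range_succ]
      ring

noncomputable def aF15 (i : ℕ) : ℝ := ∑ j ∈ Finset.range (i + 1),
    ((2 * i).choose (2 * j) : ℝ) * 2 ^ j /
      ((2 * (i : ℝ) - 2 * (j : ℝ) + 1) * (2 * (j : ℝ) + 1))

private lemma keyIdentity15 (n : ℕ) :
    ∑ i ∈ range (n+1), ((2*n).choose (2*i) : ℝ) * aF15 i = 2^n * aF15 n := by
  have swap : ∑ i ∈ range (n+1), ((2*n).choose (2*i) : ℝ) * aF15 i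
      = ∑ j ∈ range (n+1), ∑ i ∈ Finset.Ico j (n+1),
          ((2*n).choose (2*i) : ℝ) * (((2*i).choose (2*j) : ℝ) * 2 ^ j /
            ((2 * (i : ℝ) - 2 * (j : ℝ) + 1) * (2 * (j : ℝ) + 1))) := by
    have h0 : ∑ i ∈ range (n+1), ((2*n).choose (2*i) : ℝ) * aF15 i
        = ∑ i ∈ range (n+1), ∑ j ∈ range (i+1),
            ((2*n).choose (2*i) : ℝ) * (((2*i).choose (2*j) : ℝ) * 2 ^ j /
              ((2 * (i : ℝ) - 2 * (j : ℝ) + 1) * (2 * (j : ℝ) + 1))) := by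
      refine Finset.sum_congr rfl fun i _ => ?_
      rw [aF15, Finset.mul_sum]
    rw [h0]
    have hcomm := Finset.sum_Ico_Ico_comm 0 (n+1) (fun j i =>
        ((2*n).choose (2*i) : ℝ) * (((2*i).choose (2*j) : ℝ) * 2 ^ j /
            ((2 * (i : ℝ) - 2 * (j : ℝ) + 1) * (2 * (j : ℝ) + 1))))
    simp only [Nat.Ico_zero_eq_range] at hcomm
    exact hcomm.symm
  rw [swap]
  have inner : ∀ j ∈ range (n+1), ∑ i ∈ Finset.Ico j (n+1),
          ((2*n).choose (2*i) : ℝ) * (((2*i).choose (2*j) : ℝ) * 2 ^ j /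
            ((2 * (i : ℝ) - 2 * (j : ℝ) + 1) * (2 * (j : ℝ) + 1)))
      = ((2*n).choose (2*j) : ℝ) * 2 ^ j / (2*(j:ℝ)+1) * (4^(n-j) / (2*((n-j : ℕ):ℝ)+1)) := by
    intro j hj
    rw [Finset.mem_range] at hj
    have hjn : j ≤ n := by omega
    rw [Finset.sum_Ico_eq_sum_range]
    have hrange : n + 1 - j = (n - j) + 1 := by omega
    rw [hrange]
    have hterm : ∀ k ∈ range ((n-j)+1),
        ((2*n).choose (2*(j+k)) : ℝ) * (((2*(j+k)).choose (2*j) : ℝ) * 2 ^ j /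
            ((2 * ((j+k : ℕ) : ℝ) - 2 * (j : ℝ) + 1) * (2 * (j : ℝ) + 1)))
        = ((2*n).choose (2*j) : ℝ) * 2 ^ j / (2*(j:ℝ)+1) *
            (((2*(n-j)).choose (2*k) : ℝ) / (2*(k:ℝ)+1)) := by
      intro k hk
      rw [Finset.mem_range] at hk
      have hkn : j + k ≤ n := by omega
      have hchoose : (2*n).choose (2*(j+k)) * (2*(j+k)).choose (2*j)
          = (2*n).choose (2*j) * (2*(n-j)).choose (2*k) := by
        have h1 := Nat.choose_mul (n := 2*n) (show 2*j ≤ 2*(j+k) by omega)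
        rw [h1]
        congr 2 <;> omega
      have hcast : ((2*n).choose (2*(j+k)) : ℝ) * ((2*(j+k)).choose (2*j) : ℝ)
          = ((2*n).choose (2*j) : ℝ) * ((2*(n-j)).choose (2*k) : ℝ) := by exact_mod_cast hchoose
      have hd : 2 * ((j+k : ℕ) : ℝ) - 2 * (j : ℝ) + 1 = 2*(k:ℝ)+1 := by push_cast; ring
      rw [hd]
      have h2k : (2*(k:ℝ)+1) ≠ 0 := by positivity
      have h2j : (2*(j:ℝ)+1) ≠ 0 := by positivity
      field_simp
      linear_combination hcast
    rw [Finset.sum_congr rfl hterm, ← Finset.mul_sum, invSum15 (n-j)]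
  rw [Finset.sum_congr rfl inner]
  have hrefl := Finset.sum_range_reflect (fun j =>
      ((2*n).choose (2*j) : ℝ) * 2 ^ j / (2*(j:ℝ)+1) * (4^(n-j) / (2*((n-j : ℕ):ℝ)+1))) (n+1)
  rw [← hrefl]
  rw [aF15, Finset.mul_sum]
  refine Finset.sum_congr rfl fun j hj => ?_
  rw [Finset.mem_range] at hj
  have hjn : j ≤ n := by omega
  have e0 : n + 1 - 1 - j = n - j := by omega
  rw [e0]
  have e1 : n - (n - j) = j := by omega
  rw [e1]
  have e2 : (2*n).choose (2*(n-j)) = (2*n).choose (2*j) := by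
    have h : 2*(n-j) = 2*n - 2*j := by omega
    rw [h, Nat.choose_symm (by omega)]
  rw [e2]
  have c1 : ((n - j : ℕ) : ℝ) = (n:ℝ) - (j:ℝ) := by
    push_cast [Nat.cast_sub hjn]; ring
  rw [c1]
  have h2j : (2*(j:ℝ)+1) ≠ 0 := by positivity
  have hjr : (j:ℝ) ≤ (n:ℝ) := by exact_mod_cast hjn
  have h2nj : (2*((n:ℝ)-(j:ℝ))+1) ≠ 0 := by nlinarith
  have e3 : (2:ℝ)^(n-j) * 2^j = 2^n := by rw [← pow_add]; congr 1; omega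
  have e4 : (4:ℝ)^j = 2^j * 2^j := by rw [← mul_pow]; norm_num
  have hden : 2 * (n:ℝ) - 2 * (j:ℝ) + 1 = 2*((n:ℝ)-(j:ℝ))+1 := by ring
  rw [hden]
  rw [div_mul_div_comm, ← mul_div_assoc]
  congr 1
  rw [e4]
  linear_combination ((2*n).choose (2*j) : ℝ) * (2:ℝ)^j * e3

/-! ### Probabilistic auxiliary definitions -/

noncomputable def Z15 {Ω : Type*} (c : ℕ → ℝ) (X : ℕ → Ω → ℝ) (s j : ℕ) : Ω → ℝ :=
  fun ω => (if j < s then 1 else c (j - s)) * X j ω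

noncomputable def T15 {Ω : Type*} (c : ℕ → ℝ) (X : ℕ → Ω → ℝ) (s N : ℕ) : Ω → ℝ :=
  fun ω => ∑ j ∈ Finset.Ico s (N+s), Z15 c X s j ω

noncomputable def muN15 (c : ℕ → ℝ) : ℕ → ℕ → ℝ
  | 0, k => if k = 0 then 1 else 0
  | (N+1), k => ∑ i ∈ Finset.range (k+1),
      muN15 c N i * ((c N)^(k-i) * (if Even (k-i) then (1:ℝ) else 0)) * ((k.choose i : ℕ) : ℝ)

private lemma T15_eq {Ω : Type*} (c : ℕ → ℝ) (X : ℕ → Ω → ℝ) (s N : ℕ) (ω : Ω) :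
    T15 c X s N ω = ∑ n ∈ Finset.range N, c n * X (n+s) ω := by
  rw [T15, Finset.sum_Ico_eq_sum_range]
  simp only [Nat.add_sub_cancel]
  refine Finset.sum_congr rfl fun k _ => ?_
  rw [Z15]
  rw [if_neg (by omega), Nat.add_sub_cancel_left, Nat.add_comm s k]

private lemma T15_bound {Ω : Type*} (c : ℕ → ℝ) (hc0 : ∀ n, 0 ≤ c n) (X : ℕ → Ω → ℝ) (ω : Ω)
    (hω : ∀ n, X n ω = 1 ∨ X n ω = -1) (s N : ℕ) :
    |T15 c X s N ω| ≤ ∑ n ∈ Finset.range N, c n := by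
  rw [T15_eq]
  refine (Finset.abs_sum_le_sum_abs _ _).trans ?_
  refine Finset.sum_le_sum fun n _ => ?_
  rw [abs_mul, abs_of_nonneg (hc0 n)]
  have : |X (n+s) ω| = 1 := by rcases hω (n+s) with h | h <;> rw [h] <;> norm_num
  rw [this, mul_one]

private lemma bddInteg {Ω : Type*} [MeasurableSpace Ω] (P : Measure Ω) [IsProbabilityMeasure P]
    {f : Ω → ℝ} (hf : AEStronglyMeasurable f P) {C : ℝ} (hC : ∀ᵐ ω ∂P, ‖f ω‖ ≤ C) :
    Integrable f P :=
  (integrable_const C).mono' hf hC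

/-- Moments of the finite partial sums do not depend on the index shift `s`. -/
private lemma moments15 {Ω : Type*} [MeasurableSpace Ω] (P : Measure Ω) [IsProbabilityMeasure P]
    (X : ℕ → Ω → ℝ) (hmeas : ∀ n, Measurable (X n))
    (hindep : iIndepFun X P)
    (hXpow : ∀ i j, ∫ ω, (X i ω)^j ∂P = if Even j then (1:ℝ) else 0)
    (hbd : ∀ᵐ ω ∂P, ∀ n, X n ω = 1 ∨ X n ω = -1)
    (c : ℕ → ℝ) (hc0 : ∀ n, 0 ≤ c n) :
    ∀ N k s, ∫ ω, (T15 c X s N ω)^k ∂P = muN15 c N k := by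
  have habs : ∀ᵐ ω ∂P, ∀ n, |X n ω| ≤ 1 := by
    filter_upwards [hbd] with ω hω n
    rcases hω n with h | h <;> rw [h] <;> norm_num
  have hZmeas : ∀ s j, Measurable (Z15 c X s j) := fun s j => (hmeas j).const_mul _
  have hZindep : ∀ s, iIndepFun (Z15 c X s) P := by
    intro s
    exact hindep.comp (fun j (x:ℝ) => (if j < s then 1 else c (j - s)) * x)
      (fun j => measurable_id.const_mul _)
  have hTmeas : ∀ s N, Measurable (T15 c X s N) :=
    fun s N => Finset.measurable_sum _ (fun j _ => hZmeas s j)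
  intro N
  induction N with
  | zero =>
      intro k s
      have h0 : ∀ ω : Ω, T15 c X s 0 ω = 0 := by
        intro ω; rw [T15]; simp [Finset.Ico_self]
      by_cases hk : k = 0
      · subst hk; simp only [pow_zero, muN15]
        rw [integral_const]; simp
      · simp only [muN15, if_neg hk]
        rw [integral_congr_ae (ae_of_all _ fun ω => by rw [h0 ω, zero_pow hk])]
        simp
  | succ N ih =>
      intro k s
      have hsplit : ∀ ω, T15 c X s (N+1) ω = T15 c X s N ω + Z15 c X s (N+s) ω := by
        intro ω
        rw [T15, T15, show N+1+s = (N+s)+1 by omega, Finset.sum_Ico_succ_top (by omega)]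
      have hZtop : ∀ ω, Z15 c X s (N+s) ω = c N * X (N+s) ω := by
        intro ω; rw [Z15, if_neg (by omega), Nat.add_sub_cancel]
      -- independence of the partial sum and the top term
      have hfun : (∑ j ∈ Finset.Ico s (N+s), Z15 c X s j) = T15 c X s N := by
        funext ω; rw [T15, Finset.sum_apply]
      have hind : IndepFun (T15 c X s N) (Z15 c X s (N+s)) P := by
        have := (hZindep s).indepFun_finsetSum_of_notMem (hZmeas s)
          (show N+s ∉ Finset.Ico s (N+s) by simp)
        rwa [hfun] at this
      -- integrability facts
      have hTbdd : ∀ p : ℕ, ∀ᵐ ω ∂P, ‖(T15 c X s N ω)^p‖ ≤ (∑ n ∈ Finset.range N, c n)^p := by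
        intro p
        filter_upwards [hbd] with ω hω
        rw [norm_pow, Real.norm_eq_abs]
        exact pow_le_pow_left₀ (abs_nonneg _) (T15_bound c hc0 X ω hω s N) p
      have hZbdd : ∀ p : ℕ, ∀ᵐ ω ∂P, ‖(Z15 c X s (N+s) ω)^p‖ ≤ (c N)^p := by
        intro p
        filter_upwards [habs] with ω hω
        rw [norm_pow, Real.norm_eq_abs]
        refine pow_le_pow_left₀ (abs_nonneg _) ?_ p
        rw [hZtop ω, abs_mul, abs_of_nonneg (hc0 N)]
        calc c N * |X (N+s) ω| ≤ c N * 1 := by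
              exact mul_le_mul_of_nonneg_left (hω (N+s)) (hc0 N)
          _ = c N := mul_one _
      have hTint : ∀ p : ℕ, Integrable (fun ω => (T15 c X s N ω)^p) P :=
        fun p => bddInteg P (((hTmeas s N).pow_const p).aestronglyMeasurable) (hTbdd p)
      have hZint : ∀ p : ℕ, Integrable (fun ω => (Z15 c X s (N+s) ω)^p) P :=
        fun p => bddInteg P (((hZmeas s (N+s)).pow_const p).aestronglyMeasurable) (hZbdd p)
      -- expand the power
      have hexp : (fun ω => (T15 c X s (N+1) ω)^k)
          = fun ω => ∑ i ∈ Finset.range (k+1),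
              (T15 c X s N ω)^i * (Z15 c X s (N+s) ω)^(k-i) * ((k.choose i : ℕ) : ℝ) := by
        funext ω; rw [hsplit ω, add_pow]
      rw [hexp]
      have hint_term : ∀ i ∈ Finset.range (k+1), Integrable
          (fun ω => (T15 c X s N ω)^i * (Z15 c X s (N+s) ω)^(k-i) * ((k.choose i : ℕ) : ℝ)) P := by
        intro i _
        refine Integrable.mul_const ?_ _
        refine bddInteg P ?_ (C := (∑ n ∈ Finset.range N, c n)^i * (c N)^(k-i)) ?_
        · exact (((hTmeas s N).pow_const i).mul
            ((hZmeas s (N+s)).pow_const (k-i))).aestronglyMeasurable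
        · filter_upwards [hTbdd i, hZbdd (k-i)] with ω h1 h2
          rw [norm_mul]
          exact mul_le_mul h1 h2 (norm_nonneg _) (pow_nonneg (Finset.sum_nonneg fun n _ => hc0 n) i)
      rw [integral_finset_sum _ hint_term]
      rw [muN15]
      refine Finset.sum_congr rfl fun i _ => ?_
      rw [integral_mul_const]
      have hindpow : IndepFun (fun ω => (T15 c X s N ω)^i)
          (fun ω => (Z15 c X s (N+s) ω)^(k-i)) P :=
        hind.comp (measurable_id.pow_const i) (measurable_id.pow_const (k-i))
      have hmul : ∫ ω, (T15 c X s N ω)^i * (Z15 c X s (N+s) ω)^(k-i) ∂P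
          = (∫ ω, (T15 c X s N ω)^i ∂P) * ∫ ω, (Z15 c X s (N+s) ω)^(k-i) ∂P :=
        hindpow.integral_fun_mul_eq_mul_integral (hTint i).aestronglyMeasurable (hZint (k-i)).aestronglyMeasurable
      rw [hmul, ih i s]
      have hZmom : ∫ ω, (Z15 c X s (N+s) ω)^(k-i) ∂P
          = (c N)^(k-i) * (if Even (k-i) then (1:ℝ) else 0) := by
        have : (fun ω => (Z15 c X s (N+s) ω)^(k-i))
            = fun ω => (c N)^(k-i) * (X (N+s) ω)^(k-i) := by
          funext ω; rw [hZtop ω, mul_pow]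
        rw [this, integral_const_mul, hXpow]
      rw [hZmom]

/-- `m_(2n)(√2) = ∑_{j=0}^{n} C(2n,2j) 2^j /((2n-2j+1)(2j+1))`
and also `m_(2n)(√2) = (2^n - 1)⁻¹ ∑_{j=0}^{n-1} C(2n,2j) m_(2j)(√2)`. -/
theorem stmt_15 {Ω : Type*} [MeasurableSpace Ω] (P : Measure Ω) [IsProbabilityMeasure P]
    (X : ℕ → Ω → ℝ) (hmeas : ∀ n, Measurable (X n))
    (hindep : iIndepFun X P)
    (h1 : ∀ n, P {ω | X n ω = 1} = 1 / 2) (h2 : ∀ n, P {ω | X n ω = -1} = 1 / 2)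
    (S : ℝ → Ω → ℝ)
    (hS : ∀ l : ℝ, 1 < l → ∀ ω, S l ω = ∑' n : ℕ, l ^ (-(n + 1 : ℤ)) * X n ω)
    (m : ℝ → ℕ → ℝ) (hm : ∀ l k, m l k = ∫ ω, (S l ω) ^ k ∂P)
    (n : ℕ) (hn : 1 ≤ n) :
    (m (Real.sqrt 2) (2 * n) = ∑ j ∈ Finset.range (n + 1),
        ((2 * n).choose (2 * j) : ℝ) * 2 ^ j /
          ((2 * (n : ℝ) - 2 * (j : ℝ) + 1) * (2 * (j : ℝ) + 1))) ∧
      m (Real.sqrt 2) (2 * n) = ((2 : ℝ) ^ n - 1)⁻¹ *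
        ∑ j ∈ Finset.range n, ((2 * n).choose (2 * j) : ℝ) * m (Real.sqrt 2) (2 * j) := by
  classical
  have hs2 : (1:ℝ) < Real.sqrt 2 := by
    have h := Real.sqrt_lt_sqrt (by norm_num : (0:ℝ) ≤ 1) (by norm_num : (1:ℝ) < 2)
    simpa using h
  set r : ℝ := (Real.sqrt 2)⁻¹ with hr_def
  have hrpos : 0 < r := inv_pos.mpr (lt_trans one_pos hs2)
  have hr1 : r < 1 := (inv_lt_one₀ (lt_trans one_pos hs2)).mpr hs2
  have hr2 : r^2 = 2⁻¹ := by
    rw [hr_def, inv_pow, Real.sq_sqrt (by norm_num : (0:ℝ) ≤ 2)]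
  set c : ℕ → ℝ := fun k => r^(k+1) with hc_def
  have hc0 : ∀ k, 0 ≤ c k := fun k => (pow_pos hrpos _).le
  have hcsum : Summable c := by
    have h := (summable_geometric_of_lt_one hrpos.le hr1).mul_left r
    exact h.congr fun k => (pow_succ' r k).symm
  set B : ℝ := ∑' k, c k with hB_def
  have hpartB : ∀ N, ∑ k ∈ Finset.range N, c k ≤ B :=
    fun N => Summable.sum_le_tsum _ (fun i _ => hc0 i) hcsum
  -- almost surely all X are ±1
  have hGae : ∀ᵐ ω ∂P, ∀ k, X k ω = 1 ∨ X k ω = -1 := by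
    rw [MeasureTheory.ae_all_iff]
    intro k
    have hA : MeasurableSet {ω | X k ω = 1} := hmeas k (measurableSet_singleton 1)
    have hBm : MeasurableSet {ω | X k ω = -1} := hmeas k (measurableSet_singleton (-1))
    have hdisj : Disjoint {ω | X k ω = 1} {ω | X k ω = -1} := by
      rw [Set.disjoint_left]
      rintro ω hω1 hω2
      simp only [Set.mem_setOf_eq] at hω1 hω2
      rw [hω1] at hω2; norm_num at hω2
    have hu : P ({ω | X k ω = 1} ∪ {ω | X k ω = -1}) = 1 := by
      rw [measure_union hdisj hBm, h1 k, h2 k, one_div, ENNReal.inv_two_add_inv_two]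
    have hcompl : P ({ω | X k ω = 1} ∪ {ω | X k ω = -1})ᶜ = 0 := by
      rw [measure_compl (hA.union hBm) (measure_ne_top _ _), hu, measure_univ, tsub_self]
    rw [ae_iff]
    refine measure_mono_null (fun ω hω => ?_) hcompl
    simp only [Set.mem_setOf_eq] at hω
    simp only [Set.mem_compl_iff, Set.mem_union, Set.mem_setOf_eq]
    tauto
  -- integral of X i
  have hXint : ∀ i, ∫ ω, X i ω ∂P = 0 := by
    intro i
    have hA : MeasurableSet {ω | X i ω = 1} := hmeas i (measurableSet_singleton 1)
    have hBm : MeasurableSet {ω | X i ω = -1} := hmeas i (measurableSet_singleton (-1))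
    have hae : (fun ω => X i ω) =ᵐ[P]
        (fun ω => Set.indicator {ω | X i ω = 1} (fun _ => (1:ℝ)) ω
          - Set.indicator {ω | X i ω = -1} (fun _ => (1:ℝ)) ω) := by
      filter_upwards [hGae] with ω hω
      rcases hω i with h | h
      · have h2' : ω ∉ {ω | X i ω = -1} := by simp only [Set.mem_setOf_eq, h]; norm_num
        have h1' : ω ∈ {ω | X i ω = 1} := h
        rw [Set.indicator_of_mem h1', Set.indicator_of_notMem h2', h]; norm_num
      · have h1' : ω ∉ {ω | X i ω = 1} := by simp only [Set.mem_setOf_eq, h]; norm_num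
        have h2' : ω ∈ {ω | X i ω = -1} := h
        rw [Set.indicator_of_notMem h1', Set.indicator_of_mem h2', h]; norm_num
    rw [integral_congr_ae hae,
      integral_sub ((integrable_const (1:ℝ)).indicator hA) ((integrable_const (1:ℝ)).indicator hBm),
      integral_indicator_const (1:ℝ) hA, integral_indicator_const (1:ℝ) hBm, measureReal_def, measureReal_def, h1 i, h2 i]
    simp
  -- moments of a single X i
  have hXpow : ∀ i j, ∫ ω, (X i ω)^j ∂P = if Even j then (1:ℝ) else 0 := by
    intro i j
    by_cases hj : Even j
    · rw [if_pos hj]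
      have hae : (fun ω => (X i ω)^j) =ᵐ[P] (fun _ => (1:ℝ)) := by
        filter_upwards [hGae] with ω hω
        rcases hω i with h | h
        · rw [h, one_pow]
        · rw [h, hj.neg_one_pow]
      rw [integral_congr_ae hae]; simp
    · rw [if_neg hj]
      have hodd : Odd j := Nat.not_even_iff_odd.mp hj
      have hae : (fun ω => (X i ω)^j) =ᵐ[P] X i := by
        filter_upwards [hGae] with ω hω
        rcases hω i with h | h
        · rw [h, one_pow]
        · rw [h, hodd.neg_one_pow]
      rw [integral_congr_ae hae, hXint i]
  have hMom := moments15 P X hmeas hindep hXpow hGae c hc0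
  -- the shifted series
  set Sf : ℕ → Ω → ℝ := fun s ω => ∑' k : ℕ, c k * X (k+s) ω with hSf_def
  have hsummable : ∀ s (ω : Ω), (∀ k, X k ω = 1 ∨ X k ω = -1) →
      Summable (fun k => c k * X (k+s) ω) := by
    intro s ω hω
    refine Summable.of_norm_bounded hcsum fun k => ?_
    rw [norm_mul, Real.norm_eq_abs, Real.norm_eq_abs, abs_of_nonneg (hc0 k)]
    have h : |X (k+s) ω| = 1 := by rcases hω (k+s) with h | h <;> rw [h] <;> norm_num
    rw [h, mul_one]
  have hTmeas : ∀ s N, Measurable (T15 c X s N) :=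
    fun s N => Finset.measurable_sum _ (fun j _ => (hmeas j).const_mul _)
  have hconv : ∀ s, ∀ᵐ ω ∂P,
      Filter.Tendsto (fun N => T15 c X s N ω) Filter.atTop (nhds (Sf s ω)) := by
    intro s
    filter_upwards [hGae] with ω hω
    have hsum := hsummable s ω hω
    have ht := hsum.hasSum.tendsto_sum_nat
    simp only [hSf_def]
    exact ht.congr fun N => (T15_eq c X s N ω).symm
  have hSaesm : ∀ s, AEStronglyMeasurable (Sf s) P := fun s =>
    aestronglyMeasurable_of_tendsto_ae Filter.atTop
      (fun N => (hTmeas s N).aestronglyMeasurable) (hconv s)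
  have hSbd : ∀ s, ∀ᵐ ω ∂P, |Sf s ω| ≤ B := by
    intro s
    filter_upwards [hGae, hconv s] with ω hω hconvω
    refine le_of_tendsto hconvω.abs (Filter.Eventually.of_forall fun N => ?_)
    exact (T15_bound c hc0 X ω hω s N).trans (hpartB N)
  have hlim : ∀ s k, Filter.Tendsto (fun N => muN15 c N k) Filter.atTop
      (nhds (∫ ω, (Sf s ω)^k ∂P)) := by
    intro s k
    have hDCT := tendsto_integral_of_dominated_convergence (μ := P)
        (F := fun N ω => (T15 c X s N ω)^k) (f := fun ω => (Sf s ω)^k) (bound := fun _ => B^k)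
        (fun N => ((hTmeas s N).pow_const k).aestronglyMeasurable)
        (integrable_const _)
        (fun N => by
          filter_upwards [hGae] with ω hω
          rw [norm_pow, Real.norm_eq_abs]
          exact pow_le_pow_left₀ (abs_nonneg _)
            ((T15_bound c hc0 X ω hω s N).trans (hpartB N)) k)
        (by
          filter_upwards [hconv s] with ω hω
          exact hω.pow k)
    have heq : (fun N => ∫ ω, (T15 c X s N ω)^k ∂P) = fun N => muN15 c N k :=
      funext fun N => hMom N k s
    rwa [heq] at hDCT
  set M : ℕ → ℝ := fun k => ∫ ω, (Sf 0 ω)^k ∂P with hM_def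
  have hSS : ∀ k, ∫ ω, (Sf 1 ω)^k ∂P = M k := by
    intro k
    simp only [hM_def]
    exact tendsto_nhds_unique (hlim 1 k) (hlim 0 k)
  -- mixed moments
  have hmix : ∀ j k, ∫ ω, (X 0 ω)^j * (Sf 1 ω)^k ∂P
      = (if Even j then (1:ℝ) else 0) * M k := by
    intro j k
    have hZ0 : Z15 c X 1 0 = X 0 := by funext ω; rw [Z15]; norm_num
    have hseq : ∀ N, ∫ ω, (X 0 ω)^j * (T15 c X 1 N ω)^k ∂P
        = (if Even j then (1:ℝ) else 0) * muN15 c N k := by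
      intro N
      have hfun : (∑ i ∈ Finset.Ico 1 (N+1), Z15 c X 1 i) = T15 c X 1 N := by
        funext ω; rw [T15, Finset.sum_apply]
      have hZmeas : ∀ i, Measurable (Z15 c X 1 i) := fun i => (hmeas i).const_mul _
      have hZindep : iIndepFun (Z15 c X 1) P :=
        hindep.comp (fun i (x:ℝ) => (if i < 1 then 1 else c (i - 1)) * x)
          (fun i => measurable_id.const_mul _)
      have hind : IndepFun (T15 c X 1 N) (X 0) P := by
        have h := hZindep.indepFun_finsetSum_of_notMem hZmeas
          (show 0 ∉ Finset.Ico 1 (N+1) by simp)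
        rwa [hfun, hZ0] at h
      have hindpow : IndepFun (fun ω => (X 0 ω)^j) (fun ω => (T15 c X 1 N ω)^k) P :=
        (hind.symm).comp (measurable_id.pow_const j) (measurable_id.pow_const k)
      have hXj_int : Integrable (fun ω => (X 0 ω)^j) P := by
        refine bddInteg P (((hmeas 0).pow_const j).aestronglyMeasurable) (C := 1) ?_
        filter_upwards [hGae] with ω hω
        rw [norm_pow, Real.norm_eq_abs]
        rcases hω 0 with h | h <;> rw [h] <;> simp
      have hT_int : Integrable (fun ω => (T15 c X 1 N ω)^k) P := by
        refine bddInteg P (((hTmeas 1 N).pow_const k).aestronglyMeasurable) (C := B^k) ?_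
        filter_upwards [hGae] with ω hω
        rw [norm_pow, Real.norm_eq_abs]
        exact pow_le_pow_left₀ (abs_nonneg _)
          ((T15_bound c hc0 X ω hω 1 N).trans (hpartB N)) k
      have hmul : ∫ ω, (X 0 ω)^j * (T15 c X 1 N ω)^k ∂P
          = (∫ ω, (X 0 ω)^j ∂P) * ∫ ω, (T15 c X 1 N ω)^k ∂P :=
        hindpow.integral_fun_mul_eq_mul_integral hXj_int.aestronglyMeasurable hT_int.aestronglyMeasurable
      rw [hmul, hXpow 0 j, hMom N k 1]
    have hDCT := tendsto_integral_of_dominated_convergence (μ := P)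
        (F := fun N ω => (X 0 ω)^j * (T15 c X 1 N ω)^k)
        (f := fun ω => (X 0 ω)^j * (Sf 1 ω)^k) (bound := fun _ => B^k)
        (fun N => (((hmeas 0).pow_const j).mul
          ((hTmeas 1 N).pow_const k)).aestronglyMeasurable)
        (integrable_const _)
        (fun N => by
          filter_upwards [hGae] with ω hω
          rw [norm_mul, norm_pow, norm_pow, Real.norm_eq_abs, Real.norm_eq_abs]
          have hX1 : |X 0 ω| = 1 := by rcases hω 0 with h | h <;> rw [h] <;> norm_num
          rw [hX1, one_pow, one_mul]
          exact pow_le_pow_left₀ (abs_nonneg _)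
            ((T15_bound c hc0 X ω hω 1 N).trans (hpartB N)) k)
        (by
          filter_upwards [hconv 1] with ω hω
          exact tendsto_const_nhds.mul (hω.pow k))
    have hseq' : (fun N => ∫ ω, (X 0 ω)^j * (T15 c X 1 N ω)^k ∂P)
        = fun N => (if Even j then (1:ℝ) else 0) * muN15 c N k := funext hseq
    rw [hseq'] at hDCT
    have hlim2 := (hlim 1 k).const_mul (if Even j then (1:ℝ) else 0)
    rw [hSS k] at hlim2
    exact tendsto_nhds_unique hDCT hlim2
  -- decomposition
  have hdec : ∀ᵐ ω ∂P, Sf 0 ω = r * (X 0 ω + Sf 1 ω) := by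
    filter_upwards [hGae] with ω hω
    have hsum0 := hsummable 0 ω hω
    have h0 : Sf 0 ω = c 0 * X (0+0) ω + ∑' k, c (k+1) * X (k+1+0) ω := by
      simp only [hSf_def]
      exact Summable.tsum_eq_zero_add hsum0
    rw [h0]
    have hterm : ∀ k:ℕ, c (k+1) * X (k+1+0) ω = r * (c k * X (k+1) ω) := by
      intro k
      have hce : c (k+1) = r * c k := pow_succ' r (k+1)
      rw [hce]
      norm_num [mul_assoc]
    have htail : ∑' k, c (k+1) * X (k+1+0) ω = r * Sf 1 ω := by
      rw [tsum_congr hterm, tsum_mul_left]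
    rw [htail]
    have hc00 : c 0 = r := pow_one r
    rw [hc00]
    norm_num [mul_add]
  have hM0 : M 0 = 1 := by simp only [hM_def]; simp
  -- the recursion
  have hrec : ∀ q : ℕ, 2^q * M (2*q)
      = ∑ i ∈ Finset.range (q+1), ((2*q).choose (2*i) : ℝ) * M (2*i) := by
    intro q
    have hint : ∀ j ∈ Finset.range (2*q+1), Integrable
        (fun ω => (X 0 ω)^j * (Sf 1 ω)^(2*q-j) * (((2*q).choose j : ℕ) : ℝ)) P := by
      intro j _
      refine Integrable.mul_const ?_ _
      refine bddInteg P ?_ (C := 1 * B^(2*q-j)) ?_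
      · exact (((hmeas 0).pow_const j).aemeasurable.aestronglyMeasurable.mul
          (((hSaesm 1).aemeasurable.pow_const (2*q-j)).aestronglyMeasurable))
      · filter_upwards [hGae, hSbd 1] with ω hω hbnd
        rw [norm_mul, norm_pow, norm_pow, Real.norm_eq_abs, Real.norm_eq_abs]
        have hX1 : |X 0 ω| = 1 := by rcases hω 0 with h | h <;> rw [h] <;> norm_num
        rw [hX1, one_pow]
        refine mul_le_mul le_rfl (pow_le_pow_left₀ (abs_nonneg _) hbnd _) (by positivity)
          (by norm_num)
    have e1 : M (2*q) = ∫ ω, (r * (X 0 ω + Sf 1 ω))^(2*q) ∂P := by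
      simp only [hM_def]
      refine integral_congr_ae ?_
      filter_upwards [hdec] with ω h
      rw [h]
    have e2 : (fun ω => (r * (X 0 ω + Sf 1 ω))^(2*q))
        = fun ω => r^(2*q) * ∑ j ∈ Finset.range (2*q+1),
            (X 0 ω)^j * (Sf 1 ω)^(2*q-j) * (((2*q).choose j : ℕ):ℝ) := by
      funext ω; rw [mul_pow, add_pow]
    rw [e1, e2, integral_const_mul, integral_finset_sum _ hint]
    have e3 : ∀ j ∈ Finset.range (2*q+1),
        ∫ ω, (X 0 ω)^j * (Sf 1 ω)^(2*q-j) * (((2*q).choose j : ℕ):ℝ) ∂P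
        = (if Even j then (1:ℝ) else 0) * (M (2*q-j) * (((2*q).choose j : ℕ):ℝ)) := by
      intro j _
      rw [integral_mul_const, hmix j (2*q-j)]
      ring
    rw [Finset.sum_congr rfl e3,
      evenFilter15 (fun j => M (2*q-j) * (((2*q).choose j : ℕ):ℝ)) q]
    have e4 : r^(2*q) = ((2:ℝ)^q)⁻¹ := by
      rw [pow_mul, hr2, inv_pow]
    rw [e4]
    have hrefl := Finset.sum_range_reflect
      (fun i => M (2*q-2*i) * (((2*q).choose (2*i) : ℕ):ℝ)) (q+1)
    rw [← hrefl]
    have e5 : ∀ i ∈ Finset.range (q+1),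
        M (2*q-2*(q+1-1-i)) * (((2*q).choose (2*(q+1-1-i)) : ℕ):ℝ)
        = ((2*q).choose (2*i) : ℝ) * M (2*i) := by
      intro i hi
      rw [Finset.mem_range] at hi
      have ee : q+1-1-i = q-i := by omega
      rw [ee]
      have e6 : 2*q - 2*(q-i) = 2*i := by omega
      have e7 : (2*q).choose (2*(q-i)) = (2*q).choose (2*i) := by
        have h : 2*(q-i) = 2*q - 2*i := by omega
        rw [h, Nat.choose_symm (by omega)]
      rw [e6, e7]; ring
    rw [Finset.sum_congr rfl e5]
    rw [← mul_assoc, mul_inv_cancel₀ (pow_ne_zero _ (two_ne_zero)), one_mul]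
  -- strong induction : M (2 i) = aF15 i
  have hMaF : ∀ i, M (2*i) = aF15 i := by
    intro i
    induction i using Nat.strong_induction_on with
    | _ i ih =>
      by_cases hi0 : i = 0
      · subst hi0
        rw [show 2*0 = 0 from rfl, hM0, aF15]
        norm_num
      · have hrec_i := hrec i
        have hsum_split : ∑ j ∈ Finset.range (i+1), ((2*i).choose (2*j) : ℝ) * M (2*j)
            = (∑ j ∈ Finset.range i, ((2*i).choose (2*j) : ℝ) * aF15 j) + M (2*i) := by
          rw [Finset.sum_range_succ]
          congr 1
          · exact Finset.sum_congr rfl fun j hj => by rw [ih j (Finset.mem_range.mp hj)]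
          · rw [Nat.choose_self]; norm_num
        have hkey := keyIdentity15 i
        have hkey' : ∑ j ∈ Finset.range i, ((2*i).choose (2*j) : ℝ) * aF15 j
            = 2^i * aF15 i - aF15 i := by
          rw [Finset.sum_range_succ, Nat.choose_self] at hkey
          push_cast at hkey
          linarith [hkey]
        have h2i : (2:ℝ)^i - 1 ≠ 0 := by
          have h : (2:ℝ)^1 ≤ 2^i := pow_le_pow_right₀ (by norm_num) (by omega)
          norm_num at h
          linarith
        have hfin : ((2:ℝ)^i - 1) * M (2*i) = ((2:ℝ)^i - 1) * aF15 i := by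
          rw [hsum_split, hkey'] at hrec_i
          ring_nf
          ring_nf at hrec_i
          linarith [hrec_i]
        exact mul_left_cancel₀ h2i hfin
  -- link with S and m
  have hSf0 : ∀ ω, S (Real.sqrt 2) ω = Sf 0 ω := by
    intro ω
    rw [hS (Real.sqrt 2) hs2]
    simp only [hSf_def]
    refine tsum_congr fun k => ?_
    have hz : (Real.sqrt 2) ^ (-(k + 1 : ℤ)) = c k := by
      rw [zpow_neg, show ((k:ℤ) + 1) = ((k+1 : ℕ) : ℤ) by push_cast; ring,
        zpow_natCast, ← inv_pow]
    rw [hz, Nat.add_zero]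
  have hmmM : ∀ k, m (Real.sqrt 2) k = M k := by
    intro k
    rw [hm]
    simp only [hM_def]
    refine integral_congr_ae (ae_of_all _ fun ω => ?_)
    show S (Real.sqrt 2) ω ^ k = Sf 0 ω ^ k
    rw [hSf0 ω]
  constructor
  · rw [hmmM, hMaF n]
    simp only [aF15]
  · have h := hrec n
    have hsplit : ∑ j ∈ Finset.range (n+1), ((2*n).choose (2*j) : ℝ) * M (2*j)
        = (∑ j ∈ Finset.range n, ((2*n).choose (2*j) : ℝ) * M (2*j)) + M (2*n) := by
      rw [Finset.sum_range_succ, Nat.choose_self]; norm_num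
    rw [hsplit] at h
    have h2n : ((2:ℝ)^n - 1) ≠ 0 := by
      have hh : (2:ℝ)^1 ≤ 2^n := pow_le_pow_right₀ (by norm_num) (by omega)
      norm_num at hh
      linarith
    simp only [hmmM]
    rw [eq_inv_mul_iff_mul_eq₀ h2n]
    linarith [h]
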